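/- Let G be a finite nilpotent group with Sylow subgroups P_1, ..., P_r, and fix k ∈ [r]. If y_k ∈ P_k generates a maximal cyclic subgroup of P_k of minimum order (among maximal cyclic subgroups of P_k), then deg(y_k) ≤ deg(x_k) in the power graph P(G) for every x_k ∈ P_k. -/

import Mathlib

/-- The power graph of a group: distinct `x` and `y` are adjacent iff one is a
positive power of the other. -/
def powerGraph (G : Type*) [Group G] : SimpleGraph G where
  Adj x y := x ≠ y ∧ ((∃ k : ℕ, 0 < k ∧ x = y ^ k) ∨ (∃ k : ℕ, 0 < k ∧ y = x ^ k))
  symm := by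
    constructor
    intro x y h
    exact ⟨h.1.symm, h.2.symm⟩
  loopless := by
    constructor
    intro x h
    exact h.1 rfl

noncomputable instance powerGraphDecidableAdj (G : Type*) [Group G] :
    DecidableRel (powerGraph G).Adj :=
  Classical.decRel _

/-- The vertex connectivity of a finite graph: the minimum number of vertices whose
deletion yields a disconnected graph or a graph with exactly one vertex. -/
noncomputable def vertexConnectivity {V : Type*} [Fintype V] (Γ : SimpleGraph V) : ℕ :=
  sInf {n | ∃ S : Finset V, S.card = n ∧
    (¬ (SimpleGraph.induce ((↑S : Set V)ᶜ) Γ).Preconnected ∨ ((↑S : Set V)ᶜ).ncard = 1)}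

/-- A subgroup is a maximal cyclic subgroup if it is cyclic and not properly contained
in any cyclic subgroup. -/
def IsMaximalCyclic {G : Type*} [Group G] (M : Subgroup G) : Prop :=
  IsCyclic ↥M ∧ ∀ N : Subgroup G, IsCyclic ↥N → M ≤ N → M = N

/-- `K` is a maximal cyclic subgroup of the subgroup `H`. -/
def IsMaximalCyclicIn {G : Type*} [Group G] (H K : Subgroup G) : Prop :=
  IsCyclic ↥K ∧ K ≤ H ∧ ∀ N : Subgroup G, IsCyclic ↥N → N ≤ H → K ≤ N → K = N

/-- A generalized quaternion group: a dicyclic group `Q_{4n}` with `n ≥ 2` a power of 2. -/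
def IsGeneralizedQuaternion (G : Type*) [Group G] : Prop :=
  ∃ n : ℕ, 2 ≤ n ∧ (∃ k : ℕ, n = 2 ^ k) ∧ Nonempty (G ≃* QuaternionGroup n)


open Subgroup Set
open scoped Pointwise

set_option maxHeartbeats 1000000
set_option linter.unusedSectionVars false

section PGAux
variable {G : Type*} [Group G] [Fintype G]

/-- membership in zpowers via positive natural power, in a finite group. -/
lemma mem_zpowers_iff_pos_pow (z x : G) :
    x ∈ zpowers z ↔ ∃ k : ℕ, 0 < k ∧ x = z ^ k := by
  constructor
  · intro h
    have hfin : IsOfFinOrder z := isOfFinOrder_of_finite z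
    obtain ⟨n, hn⟩ := hfin.mem_powers_iff_mem_zpowers.mpr h
    simp only at hn
    rcases Nat.eq_zero_or_pos n with rfl | hpos
    · exact ⟨orderOf z, orderOf_pos z, by rw [pow_orderOf_eq_one, ← hn, pow_zero]⟩
    · exact ⟨n, hpos, hn.symm⟩
  · rintro ⟨k, _, rfl⟩
    exact pow_mem (mem_zpowers z) k

/-- counting solutions of z^d = 1 in a cyclic subgroup. -/
lemma ncard_pow_eq_one (w : G) (d : ℕ) (hd : d ∣ orderOf w) :
    {z : G | z ∈ zpowers w ∧ z ^ d = 1}.ncard = d := by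
  have hN : 0 < orderOf w := orderOf_pos w
  have hd0 : 0 < d := Nat.pos_of_dvd_of_pos hd hN
  obtain ⟨e, he⟩ := hd
  have he0 : 0 < e := by
    rcases Nat.eq_zero_or_pos e with rfl | h
    · rw [Nat.mul_zero] at he; omega
    · exact h
  set u := w ^ e with hu
  have hue : orderOf u = d := by
    rw [hu, orderOf_pow]
    have hge : Nat.gcd (orderOf w) e = e :=
      Nat.gcd_eq_right ⟨d, by rw [he, Nat.mul_comm]⟩
    rw [hge, he, Nat.mul_div_cancel _ he0]
  have hset : {z : G | z ∈ zpowers w ∧ z ^ d = 1} = (zpowers u : Set G) := by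
    ext z
    constructor
    · rintro ⟨hzw, hzd⟩
      obtain ⟨n, rfl⟩ := mem_zpowers_iff.mp hzw
      have hdvd : (orderOf w : ℤ) ∣ n * d := by
        rw [orderOf_dvd_iff_zpow_eq_one, zpow_mul, zpow_natCast, hzd]
      have : (e : ℤ) ∣ n := by
        have h2 : (d : ℤ) * e ∣ n * d := by exact_mod_cast he ▸ hdvd
        have h3 : (e : ℤ) * d ∣ n * d := by rwa [mul_comm (e:ℤ)]
        exact (mul_dvd_mul_iff_right (by exact_mod_cast hd0.ne' : (d:ℤ) ≠ 0)).mp h3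
      obtain ⟨t, rfl⟩ := this
      refine mem_zpowers_iff.mpr ⟨t, ?_⟩
      rw [hu, ← zpow_natCast w e, ← zpow_mul]
    · intro hz
      obtain ⟨n, rfl⟩ := mem_zpowers_iff.mp hz
      constructor
      · exact zpow_mem (by exact pow_mem (mem_zpowers w) e) n
      · have : u ^ d = 1 := by
          rw [hu, ← pow_mul, mul_comm e d, ← he, pow_orderOf_eq_one]
        calc (u ^ n) ^ d = (u ^ d) ^ n := by
              rw [← zpow_natCast (u ^ n) d, ← zpow_mul, mul_comm, zpow_mul, zpow_natCast u d]
          _ = 1 := by rw [this]; exact one_zpow n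
  rw [hset, ← Nat.card_coe_set_eq]
  have : Nat.card (zpowers u : Set G) = Nat.card (zpowers u) := rfl
  rw [this, Nat.card_zpowers, hue]

/-- In a cyclic p-group, every element either has x as a power or is killed by p^(s-1). -/
lemma mem_zpowers_or_pow_eq_one {p m s : ℕ} (hp : p.Prime) (w x a : G)
    (hxw : x ∈ zpowers w) (haw : a ∈ zpowers w)
    (hwo : orderOf w = p ^ m) (hxo : orderOf x = p ^ s) (hs : 1 ≤ s) :
    x ∈ zpowers a ∨ a ^ p ^ (s - 1) = 1 := by
  have hdvd : orderOf a ∣ p ^ m := hwo ▸ orderOf_dvd_of_mem_zpowers haw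
  obtain ⟨j, hjm, hja⟩ := (Nat.dvd_prime_pow hp).mp hdvd
  by_cases hjs : j < s
  · right
    apply orderOf_dvd_iff_pow_eq_one.mp
    rw [hja]
    exact pow_dvd_pow p (by omega)
  · left
    push_neg at hjs
    have hxm : orderOf x ∣ orderOf w := orderOf_dvd_of_mem_zpowers hxw
    have hsm : s ≤ m := by
      rw [hxo, hwo] at hxm
      exact (Nat.pow_dvd_pow_iff_le_right hp.one_lt).mp hxm
    set A := {z : G | z ∈ zpowers w ∧ z ^ p ^ j = 1} with hA
    have hcardA : A.ncard = p ^ j :=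
      ncard_pow_eq_one w _ (hwo ▸ pow_dvd_pow p hjm)
    have hsub : (zpowers a : Set G) ⊆ A := by
      rintro z hz
      obtain ⟨n, rfl⟩ := mem_zpowers_iff.mp hz
      refine ⟨zpow_mem haw n, ?_⟩
      have h1 : a ^ p ^ j = 1 := by rw [← hja, pow_orderOf_eq_one]
      calc (a ^ n) ^ p ^ j = (a ^ p ^ j) ^ n := by
            rw [← zpow_natCast (a ^ n) (p ^ j), ← zpow_mul, mul_comm, zpow_mul,
              zpow_natCast a (p ^ j)]
        _ = 1 := by rw [h1, one_zpow]
    have hcardzp : (zpowers a : Set G).ncard = p ^ j := by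
      rw [← Nat.card_coe_set_eq]
      have : Nat.card (zpowers a : Set G) = Nat.card (zpowers a) := rfl
      rw [this, Nat.card_zpowers, hja]
    have heq : (zpowers a : Set G) = A :=
      Set.eq_of_subset_of_ncard_le hsub (by rw [hcardA, hcardzp]) (Set.toFinite A)
    have hxA : x ∈ A := by
      refine ⟨hxw, orderOf_dvd_iff_pow_eq_one.mp ?_⟩
      rw [hxo]
      exact pow_dvd_pow p hjs
    rw [← heq] at hxA
    exact hxA

/-- The "generator count": elements z with ⟨z⟩ = ⟨x⟩, for x of order p^s in context of ⟨x⟩. -/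
lemma gset_eq {p s : ℕ} (hp : p.Prime) (x : G) (hxo : orderOf x = p ^ s) (hs : 1 ≤ s) :
    {z : G | x ∈ zpowers z ∧ z ∈ zpowers x} =
      {z : G | z ∈ zpowers x ∧ ¬ z ^ p ^ (s - 1) = 1} := by
  ext z
  constructor
  · rintro ⟨hxz, hzx⟩
    refine ⟨hzx, fun h1 => ?_⟩
    have h2 : orderOf x ∣ orderOf z := orderOf_dvd_of_mem_zpowers hxz
    have h3 : orderOf z ∣ p ^ (s - 1) := orderOf_dvd_iff_pow_eq_one.mpr h1
    have h4 : p ^ s ∣ p ^ (s - 1) := hxo ▸ dvd_trans h2 h3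
    have := (Nat.pow_dvd_pow_iff_le_right hp.one_lt).mp h4
    omega
  · rintro ⟨hzx, h1⟩
    have := mem_zpowers_or_pow_eq_one hp x x z (mem_zpowers x) hzx hxo hxo hs
    rcases this with h | h
    · exact ⟨h, hzx⟩
    · exact absurd h h1

/-- count of the generator set. -/
lemma gset_card {p s : ℕ} (hp : p.Prime) (x : G) (hxo : orderOf x = p ^ s) (hs : 1 ≤ s) :
    {z : G | x ∈ zpowers z ∧ z ∈ zpowers x}.ncard + p ^ (s - 1) = p ^ s := by
  rw [gset_eq hp x hxo hs]
  have hd : p ^ (s - 1) ∣ orderOf x := hxo ▸ pow_dvd_pow p (by omega)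
  have h1 := ncard_pow_eq_one x _ hd
  have hU : {z : G | z ∈ zpowers x ∧ ¬ z ^ p ^ (s - 1) = 1} ∪
      {z : G | z ∈ zpowers x ∧ z ^ p ^ (s - 1) = 1} = (zpowers x : Set G) := by
    ext z; by_cases h : z ^ p ^ (s-1) = 1 <;> simp [h]
  have hdisj : Disjoint {z : G | z ∈ zpowers x ∧ ¬ z ^ p ^ (s - 1) = 1}
      {z : G | z ∈ zpowers x ∧ z ^ p ^ (s - 1) = 1} := by
    rw [Set.disjoint_left]
    rintro z ⟨_, h⟩ ⟨_, h'⟩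
    exact h h'
  have := Set.ncard_union_eq hdisj (Set.toFinite _) (Set.toFinite _)
  rw [hU] at this
  have hzc : (zpowers x : Set G).ncard = p ^ s := by
    rw [← Nat.card_coe_set_eq]
    have h2 : Nat.card (zpowers x : Set G) = Nat.card (zpowers x) := rfl
    rw [h2, Nat.card_zpowers, hxo]
  omega

/-- Claim B: for x, a in P' and b in K, x ∈ ⟨a*b⟩ ↔ x ∈ ⟨a⟩. -/
lemma mem_zpowers_mul_iff (P' K : Subgroup G)
    (hcomm : ∀ a ∈ P', ∀ b ∈ K, Commute a b)
    (hdisj : P' ⊓ K = ⊥)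
    (hcop : (Nat.card P').Coprime (Nat.card K))
    (x : G) (hx : x ∈ P') (a : G) (ha : a ∈ P') (b : G) (hb : b ∈ K) :
    x ∈ zpowers (a * b) ↔ x ∈ zpowers a := by
  have hC : Commute a b := hcomm a ha b hb
  constructor
  · intro h
    obtain ⟨n, hn⟩ := mem_zpowers_iff.mp h
    rw [hC.mul_zpow] at hn
    have hbn : b ^ n ∈ P' := by
      have : b ^ n = (a ^ n)⁻¹ * x := by rw [← hn]; group
      rw [this]
      exact mul_mem (inv_mem (zpow_mem ha n)) hx
    have : b ^ n ∈ P' ⊓ K := ⟨hbn, zpow_mem hb n⟩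
    rw [hdisj, Subgroup.mem_bot] at this
    rw [this, mul_one] at hn
    exact hn ▸ zpow_mem (mem_zpowers a) n
  · intro h
    have hoa : orderOf a ∣ Nat.card P' := by
      have h1 : orderOf (⟨a, ha⟩ : P') = orderOf a := (Subgroup.orderOf_coe _).symm
      rw [← h1]
      exact orderOf_dvd_natCard _
    have hob : orderOf b ∣ Nat.card K := by
      have h1 : orderOf (⟨b, hb⟩ : K) = orderOf b := (Subgroup.orderOf_coe _).symm
      rw [← h1]
      exact orderOf_dvd_natCard _
    have hco : (orderOf a).Coprime (orderOf b) :=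
      Nat.Coprime.coprime_dvd_right hob (Nat.Coprime.coprime_dvd_left hoa hcop)
    obtain ⟨e, he1, he0⟩ := Nat.chineseRemainder hco 1 0
    have key : (a * b) ^ e = a := by
      rw [hC.mul_pow]
      have h1 : a ^ e = a ^ 1 := pow_eq_pow_iff_modEq.mpr he1
      have h2 : b ^ e = b ^ 0 := pow_eq_pow_iff_modEq.mpr he0
      rw [h1, h2, pow_one, pow_zero, mul_one]
    have : a ∈ zpowers (a * b) := mem_zpowers_iff.mpr ⟨(e : ℤ), by rw [zpow_natCast, key]⟩
    exact Subgroup.zpowers_le.mpr this h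

/-- The multiplication map P' × K → G is bijective. -/
lemma mul_bijective (P' K : Subgroup G)
    (hdisj : P' ⊓ K = ⊥)
    (hcards : Nat.card P' * Nat.card K = Fintype.card G) :
    Function.Bijective (fun ab : P' × K => (ab.1 : G) * (ab.2 : G)) := by
  have hinj : Function.Injective (fun ab : P' × K => (ab.1 : G) * (ab.2 : G)) := by
    rintro ⟨a1, b1⟩ ⟨a2, b2⟩ h
    simp only at h
    have key : ((a2 : G))⁻¹ * a1 = (b2 : G) * (b1 : G)⁻¹ := by
      calc ((a2 : G))⁻¹ * a1 = (a2 : G)⁻¹ * ((a1 : G) * b1) * (b1 : G)⁻¹ := by group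
        _ = (a2 : G)⁻¹ * ((a2 : G) * b2) * (b1 : G)⁻¹ := by rw [h]
        _ = (b2 : G) * (b1 : G)⁻¹ := by group
    have h1 : ((a2 : G))⁻¹ * a1 ∈ P' ⊓ K := by
      constructor
      · exact P'.mul_mem (P'.inv_mem a2.2) a1.2
      · rw [key]; exact K.mul_mem b2.2 (K.inv_mem b1.2)
    rw [hdisj, Subgroup.mem_bot] at h1
    have ha : (a1 : G) = a2 := by
      have := h1
      rw [inv_mul_eq_one] at this
      exact this.symm
    have hb : (b1 : G) = b2 := by
      have h2 : b2 * (b1 : G)⁻¹ = 1 := key ▸ h1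
      rw [mul_inv_eq_one] at h2
      exact h2.symm
    simp [Prod.ext_iff, Subtype.ext_iff, ha, hb]
  haveI : Fintype P' := Fintype.ofFinite _
  haveI : Fintype K := Fintype.ofFinite _
  rw [Fintype.bijective_iff_injective_and_card]
  refine ⟨hinj, ?_⟩
  rw [Fintype.card_prod, ← Nat.card_eq_fintype_card (α := P'), ← Nat.card_eq_fintype_card (α := K),
    hcards]

/-- |U(x)| = |K| * u(x). -/
lemma ncard_upset (P' K : Subgroup G)
    (hcomm : ∀ a ∈ P', ∀ b ∈ K, Commute a b)
    (hdisj : P' ⊓ K = ⊥)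
    (hcop : (Nat.card P').Coprime (Nat.card K))
    (hcards : Nat.card P' * Nat.card K = Fintype.card G)
    (x : G) (hx : x ∈ P') :
    {z : G | x ∈ zpowers z}.ncard =
      Nat.card K * {z : G | z ∈ P' ∧ x ∈ zpowers z}.ncard := by
  have hbij := mul_bijective P' K hdisj hcards
  set φ := (fun ab : P' × K => (ab.1 : G) * (ab.2 : G)) with hφ
  let e : (P' × K) ≃ G := Equiv.ofBijective φ hbij
  have key : ∀ ab : P' × K, (x ∈ zpowers ((ab.1 : G))) ↔ x ∈ zpowers (e ab) :=
    fun ab => (mem_zpowers_mul_iff P' K hcomm hdisj hcop x hx ab.1 ab.1.2 ab.2 ab.2.2).symm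
  have e1 : {ab : P' × K // x ∈ zpowers ((ab.1 : G))} ≃ {z : G // x ∈ zpowers z} :=
    e.subtypeEquiv key
  have e2 : {ab : P' × K // x ∈ zpowers ((ab.1 : G))} ≃
      {a : P' // x ∈ zpowers (a : G)} × K :=
    { toFun := fun t => (⟨t.1.1, t.2⟩, t.1.2)
      invFun := fun u => ⟨(u.1.1, u.2), u.1.2⟩
      left_inv := fun t => rfl
      right_inv := fun u => rfl }
  have e3 : {a : P' // x ∈ zpowers (a : G)} ≃ {z : G // z ∈ P' ∧ x ∈ zpowers z} :=
    Equiv.subtypeSubtypeEquivSubtypeInter (· ∈ P') (x ∈ zpowers ·)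
  calc {z : G | x ∈ zpowers z}.ncard
      = Nat.card {z : G // x ∈ zpowers z} := (Nat.card_coe_set_eq _).symm
    _ = Nat.card ({a : P' // x ∈ zpowers (a : G)} × K) :=
        (Nat.card_congr (e2.symm.trans e1)).symm
    _ = Nat.card {a : P' // x ∈ zpowers (a : G)} * Nat.card K := Nat.card_prod _ _
    _ = Nat.card {z : G // z ∈ P' ∧ x ∈ zpowers z} * Nat.card K := by
        rw [Nat.card_congr e3]
    _ = Nat.card K * Nat.card {z : G // z ∈ P' ∧ x ∈ zpowers z} := mul_comm _ _
    _ = Nat.card K * {z : G | z ∈ P' ∧ x ∈ zpowers z}.ncard := by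
        rw [← Nat.card_coe_set_eq]
        rfl

lemma pg_adj_iff (x z : G) :
    (powerGraph G).Adj x z ↔ x ≠ z ∧ (x ∈ zpowers z ∨ z ∈ zpowers x) := by
  show (x ≠ z ∧ _) ↔ _
  rw [mem_zpowers_iff_pos_pow z x, mem_zpowers_iff_pos_pow x z]

lemma degree_add_one (x : G) :
    (powerGraph G).degree x + 1 = {z : G | x ∈ zpowers z ∨ z ∈ zpowers x}.ncard := by
  classical
  set N := {z : G | x ∈ zpowers z ∨ z ∈ zpowers x} with hN
  have hx : x ∈ N := Or.inr (mem_zpowers x)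
  have hnb : (powerGraph G).neighborSet x = N \ {x} := by
    ext z
    rw [SimpleGraph.mem_neighborSet, pg_adj_iff]
    constructor
    · rintro ⟨h1, h2⟩; exact ⟨h2, fun hz => h1 (Set.mem_singleton_iff.mp hz).symm⟩
    · rintro ⟨h1, h2⟩; exact ⟨fun he => h2 (Set.mem_singleton_iff.mpr he.symm), h1⟩
  have h2 : (powerGraph G).degree x = ((powerGraph G).neighborSet x).ncard := by
    rw [← SimpleGraph.card_neighborSet_eq_degree, ← Nat.card_coe_set_eq,
      Nat.card_eq_fintype_card]
  rw [h2, hnb, Set.ncard_diff_singleton_add_one hx (Set.toFinite N)]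

lemma isCyclic_zpowers (z : G) : IsCyclic (zpowers z) := by
  refine ⟨⟨⟨z, mem_zpowers z⟩, fun w => ?_⟩⟩
  obtain ⟨n, hn⟩ := mem_zpowers_iff.mp w.2
  exact mem_zpowers_iff.mpr ⟨n, Subtype.ext (by rw [SubgroupClass.coe_zpow]; exact hn)⟩

/-- generator of a cyclic subgroup. -/
lemma exists_zpowers_eq (M : Subgroup G) (hM : IsCyclic M) :
    ∃ w : G, w ∈ M ∧ zpowers w = M := by
  obtain ⟨g, hg⟩ := hM.exists_generator
  refine ⟨(g : G), g.2, le_antisymm (zpowers_le.mpr g.2) ?_⟩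
  intro z hz
  obtain ⟨n, hn⟩ := mem_zpowers_iff.mp (hg ⟨z, hz⟩)
  exact mem_zpowers_iff.mpr ⟨n, by rw [← SubgroupClass.coe_zpow, hn]⟩

/-- coprime product divisibility. -/
lemma prod_coprime_dvd {ι : Type*} (s : Finset ι) (f : ι → ℕ) (n : ℕ)
    (hco : (s : Set ι).Pairwise (Function.onFun Nat.Coprime f))
    (h : ∀ i ∈ s, f i ∣ n) : ∏ i ∈ s, f i ∣ n := by
  classical
  induction s using Finset.cons_induction with
  | empty => simp
  | cons i s his ih =>
    rw [Finset.prod_cons]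
    have hcop : (f i).Coprime (∏ j ∈ s, f j) := by
      apply Nat.Coprime.prod_right
      intro j hj
      exact hco (Finset.mem_cons_self i s) (Finset.mem_cons_of_mem hj)
        (fun he => his (he ▸ hj))
    exact hcop.mul_dvd_of_dvd_of_dvd (h i (Finset.mem_cons_self i s))
      (ih (hco.mono (by simp [Finset.coe_cons, Set.subset_insert]))
        (fun j hj => h j (Finset.mem_cons_of_mem hj)))

/-- card of sup of normal subgroups is at most product. -/
lemma card_sup_le (H N : Subgroup G) (hN : N.Normal) :
    Nat.card (H ⊔ N : Subgroup G) ≤ Nat.card H * Nat.card N := by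
  haveI := hN
  have h1 : ((H ⊔ N : Subgroup G) : Set G) = (H : Set G) * (N : Set G) :=
    Subgroup.mul_normal H N
  calc Nat.card (H ⊔ N : Subgroup G)
      = Nat.card ((H : Set G) * (N : Set G) : Set G) := by rw [← h1]; rfl
    _ ≤ Nat.card (H : Set G) * Nat.card (N : Set G) := Set.natCard_mul_le
    _ = Nat.card H * Nat.card N := rfl

/-- a Finset.sup of normal subgroups is normal. -/
lemma finset_sup_normal {ι : Type*} (s : Finset ι) (P : ι → Subgroup G)
    (h : ∀ i ∈ s, (P i).Normal) : (s.sup P).Normal := by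
  classical
  induction s using Finset.cons_induction with
  | empty => simpa using (inferInstance : (⊥ : Subgroup G).Normal)
  | cons i s his ih =>
    rw [Finset.sup_cons]
    haveI h1 : (P i).Normal := h i (Finset.mem_cons_self i s)
    haveI h2 : (s.sup P).Normal := ih (fun j hj => h j (Finset.mem_cons_of_mem hj))
    exact Subgroup.sup_normal _ _

lemma card_finset_sup_le {ι : Type*} (s : Finset ι) (P : ι → Subgroup G)
    (h : ∀ i ∈ s, (P i).Normal) :
    Nat.card ↥(s.sup P) ≤ ∏ i ∈ s, Nat.card ↥(P i) := by
  classical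
  induction s using Finset.cons_induction with
  | empty => simp
  | cons i s his ih =>
    rw [Finset.sup_cons, Finset.prod_cons]
    calc Nat.card ((P i) ⊔ s.sup P : Subgroup G)
        ≤ Nat.card ↥(P i) * Nat.card ↥(s.sup P) :=
          card_sup_le _ _ (finset_sup_normal s P (fun j hj => h j (Finset.mem_cons_of_mem hj)))
      _ ≤ Nat.card ↥(P i) * ∏ j ∈ s, Nat.card ↥(P j) := by
          exact Nat.mul_le_mul_left _ (ih (fun j hj => h j (Finset.mem_cons_of_mem hj)))

lemma subgroup_eq_of_le_of_card_le (M N : Subgroup G) (h : M ≤ N)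
    (hc : Nat.card N ≤ Nat.card M) : M = N := by
  apply SetLike.coe_injective
  apply Set.eq_of_subset_of_ncard_le h ?_ (Set.toFinite _)
  show (↑N : Set G).ncard ≤ (↑M : Set G).ncard
  rw [← Nat.card_coe_set_eq, ← Nat.card_coe_set_eq]
  exact hc

lemma arith_keyZ (cK pp A B Q NY NX u ux gx : ℤ)
    (h1 : NY + u = cK * u + pp * A) (h2 : u + A = pp * A)
    (h3 : NX + gx = cK * ux + pp * B) (h4 : gx + B = pp * B)
    (h5 : pp * Q ≤ ux + B) (hA : A ≤ Q) (hB : B ≤ Q) (hc : 1 ≤ cK) (hpp : 2 ≤ pp) :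
    NY ≤ NX := by
  have f1 : cK * (u + A) = cK * (pp * A) := by rw [h2]
  have f2 : cK * (pp * Q) ≤ cK * (ux + B) :=
    mul_le_mul_of_nonneg_left h5 (by linarith)
  have f3 : (cK - 1) * (B - A) ≤ (cK - 1) * (Q - A) :=
    mul_le_mul_of_nonneg_left (by linarith) (by linarith)
  have f4 : (cK - 1) * (Q - A) ≤ (cK * pp) * (Q - A) := by
    apply mul_le_mul_of_nonneg_right ?_ (by linarith)
    have : cK * 1 ≤ cK * pp := mul_le_mul_of_nonneg_left (by linarith) (by linarith)
    linarith
  nlinarith [f1, f2, f3, f4]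

lemma arith_key (cK pp A B Q NY NX u ux gx : ℕ)
    (h1 : NY + u = cK * u + pp * A) (h2 : u + A = pp * A)
    (h3 : NX + gx = cK * ux + pp * B) (h4 : gx + B = pp * B)
    (h5 : pp * Q ≤ ux + B) (hA : A ≤ Q) (hB : B ≤ Q) (hc : 1 ≤ cK) (hpp : 2 ≤ pp) :
    NY ≤ NX := by
  zify at h1 h2 h3 h4 h5 hA hB hc hpp ⊢
  exact arith_keyZ _ _ _ _ _ _ _ _ _ _ h1 h2 h3 h4 h5 hA hB hc hpp

end PGAux

/-- If `y` generates a maximal cyclic subgroup of the Sylow subgroup `P k` of minimum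
order, then `y` has minimum degree in `P(G)` among the vertices in `P k`. -/
theorem degree_min_in_sylow
    {G : Type*} [Group G] [Fintype G] (hnil : Group.IsNilpotent G)
    (r : ℕ) (p α : Fin r → ℕ) (P : Fin r → Subgroup G)
    (hp : ∀ i, (p i).Prime) (hmono : StrictMono p) (hα : ∀ i, 1 ≤ α i)
    (hcard : Fintype.card G = ∏ i, p i ^ α i)
    (hP : ∀ i, Nat.card ↥(P i) = p i ^ α i)
    (k : Fin r) (y : G) (hy : y ∈ P k)
    (hymax : IsMaximalCyclicIn (P k) (Subgroup.zpowers y))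
    (hymin : ∀ N : Subgroup G, IsMaximalCyclicIn (P k) N →
      Nat.card ↥(Subgroup.zpowers y) ≤ Nat.card ↥N) :
    ∀ x ∈ P k, (powerGraph G).degree y ≤ (powerGraph G).degree x := by
  classical
  intro x hx
  have hpk := hp k
  -- factorization of |G| at p i is α i
  have hppos : ∀ i, p i ^ α i ≠ 0 := fun i => (pow_pos (hp i).pos _).ne'
  have hfact : ∀ i, (Nat.card G).factorization (p i) = α i := by
    intro i
    rw [Nat.card_eq_fintype_card, hcard,
      Nat.factorization_prod (fun j _ => hppos j)]
    rw [Finset.sum_apply']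
    rw [Finset.sum_eq_single i]
    · rw [(hp i).factorization_pow, Finsupp.single_apply, if_pos rfl]
    · intro j _ hji
      rw [(hp j).factorization_pow, Finsupp.single_apply,
        if_neg (fun h => hji (hmono.injective h))]
    · intro h; exact absurd (Finset.mem_univ i) h
  -- each P i is normal
  have hPnormal : ∀ i, (P i).Normal := by
    intro i
    haveI : Fact (p i).Prime := ⟨hp i⟩
    have hcardi : Nat.card (P i) = p i ^ (Nat.card G).factorization (p i) := by
      rw [hfact i, hP i]
    have hnorm := ((isNilpotent_of_finite_tfae (G := G)).out 0 3).mp hnil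
    have := hnorm (p i) ⟨hp i⟩ (Sylow.ofCard (P i) hcardi)
    rwa [Sylow.coe_ofCard] at this
  -- the complement K
  set c := ∏ i ∈ Finset.univ.erase k, p i ^ α i with hc
  set K := (Finset.univ.erase k).sup P with hKdef
  have hKnormal : K.Normal := finset_sup_normal _ _ (fun i _ => hPnormal i)
  have hpairco : ∀ (s : Finset (Fin r)),
      (↑s : Set (Fin r)).Pairwise (Function.onFun Nat.Coprime fun i => p i ^ α i) := by
    intro s i _ j _ hij
    exact Nat.Coprime.pow _ _ ((Nat.coprime_primes (hp i) (hp j)).mpr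
      (fun h => hij (hmono.injective h)))
  have hcK : Nat.card K = c := by
    have h1 : Nat.card ↥K ≤ c := by
      calc Nat.card ↥K ≤ ∏ i ∈ Finset.univ.erase k, Nat.card ↥(P i) :=
            card_finset_sup_le _ _ (fun i _ => hPnormal i)
        _ = c := by rw [hc]; exact Finset.prod_congr rfl (fun i _ => hP i)
    have h2 : c ∣ Nat.card ↥K := by
      apply prod_coprime_dvd _ _ _ (hpairco _)
      intro i hi
      rw [← hP i]
      exact Subgroup.card_dvd_of_le (Finset.le_sup hi)
    exact Nat.le_antisymm h1 (Nat.le_of_dvd Nat.card_pos h2)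
  have hcop : (Nat.card ↥(P k)).Coprime (Nat.card ↥K) := by
    rw [hP k, hcK, hc]
    apply Nat.Coprime.prod_right
    intro i hi
    exact Nat.Coprime.pow _ _ ((Nat.coprime_primes (hp k) (hp i)).mpr
      (fun h => (Finset.mem_erase.mp hi).1 (hmono.injective h).symm))
  have hdisj : P k ⊓ K = ⊥ := by
    apply Subgroup.eq_bot_of_card_eq
    have h1 : Nat.card ↥(P k ⊓ K : Subgroup G) ∣ Nat.card ↥(P k) :=
      Subgroup.card_dvd_of_le inf_le_left
    have h2 : Nat.card ↥(P k ⊓ K : Subgroup G) ∣ Nat.card ↥K :=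
      Subgroup.card_dvd_of_le inf_le_right
    have := Nat.dvd_gcd h1 h2
    rwa [Nat.Coprime.gcd_eq_one hcop, Nat.dvd_one] at this
  have hcards : Nat.card ↥(P k) * Nat.card ↥K = Fintype.card G := by
    rw [hP k, hcK, hc, hcard]
    exact Finset.mul_prod_erase Finset.univ (fun i => p i ^ α i) (Finset.mem_univ k)
  have hcomm : ∀ a ∈ P k, ∀ b ∈ K, Commute a b := fun a ha b hb =>
    Subgroup.commute_of_normal_of_disjoint _ _ (hPnormal k) hKnormal
      (disjoint_iff.mpr hdisj) a b ha hb
  -- the counting identity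
  have count : ∀ v, v ∈ P k →
      {z : G | v ∈ zpowers z ∨ z ∈ zpowers v}.ncard +
        {z : G | v ∈ zpowers z ∧ z ∈ zpowers v}.ncard =
      Nat.card ↥K * {z : G | z ∈ P k ∧ v ∈ zpowers z}.ncard + orderOf v := by
    intro v hv
    have hU : {z : G | v ∈ zpowers z ∨ z ∈ zpowers v} =
        {z : G | v ∈ zpowers z} ∪ {z : G | z ∈ zpowers v} := Set.setOf_or
    have hI : {z : G | v ∈ zpowers z ∧ z ∈ zpowers v} =
        {z : G | v ∈ zpowers z} ∩ {z : G | z ∈ zpowers v} := Set.setOf_and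
    rw [hU, hI, Set.ncard_union_add_ncard_inter _ _ (Set.toFinite _) (Set.toFinite _)]
    have hZ : {z : G | z ∈ zpowers v}.ncard = orderOf v := by
      rw [← Nat.card_coe_set_eq]
      have h2 : Nat.card {z : G | z ∈ zpowers v} = Nat.card (zpowers v) := rfl
      rw [h2, Nat.card_zpowers]
    rw [hZ, ncard_upset (P k) K hcomm hdisj hcop hcards v hv]
  -- order of y
  have hzyP : zpowers y ≤ P k := Subgroup.zpowers_le.mpr hy
  have hoy_dvd : orderOf y ∣ p k ^ α k := by
    rw [← Nat.card_zpowers, ← hP k]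
    exact Subgroup.card_dvd_of_le hzyP
  obtain ⟨t, htα, hty⟩ := (Nat.dvd_prime_pow hpk).mp hoy_dvd
  have hyne : y ≠ 1 := by
    intro h1
    have hbot : zpowers y = ⊥ := by rw [h1]; exact Subgroup.zpowers_one_eq_bot
    rcases (P k).bot_or_exists_ne_one with hPbot | ⟨g, hg, hg1⟩
    · have := hP k
      rw [hPbot] at this
      simp only [Subgroup.mem_bot, Nat.card_eq_fintype_card] at this
      have hgt : 1 < p k ^ α k := Nat.one_lt_pow (by have := hα k; omega) hpk.one_lt
      rw [← this] at hgt
      simp at hgt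
    · have heq := hymax.2.2 (zpowers g) (_root_.isCyclic_zpowers g)
        (Subgroup.zpowers_le.mpr hg) (by rw [hbot]; exact bot_le)
      exact hg1 (by have := mem_zpowers g; rw [← heq, hbot, Subgroup.mem_bot] at this; exact this)
  have hts : 1 ≤ t := by
    rcases Nat.eq_zero_or_pos t with rfl | h
    · rw [pow_zero] at hty
      exact absurd (orderOf_eq_one_iff.mp hty) hyne
    · exact h
  -- g-set for y equals u-set for y
  have hgy_eq : {z : G | y ∈ zpowers z ∧ z ∈ zpowers y} =
      {z : G | z ∈ P k ∧ y ∈ zpowers z} := by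
    ext z
    constructor
    · rintro ⟨h1, h2⟩
      exact ⟨hzyP h2, h1⟩
    · rintro ⟨h1, h2⟩
      have heq := hymax.2.2 (zpowers z) (_root_.isCyclic_zpowers z)
        (Subgroup.zpowers_le.mpr h1) (Subgroup.zpowers_le.mpr h2)
      exact ⟨h2, heq ▸ mem_zpowers z⟩
  have hgy_card := gset_card hpk y hty hts
  have county := count y hy
  rw [hgy_eq] at county
  -- case x = 1
  by_cases hx1 : x = 1
  · have hNx : {z : G | x ∈ zpowers z ∨ z ∈ zpowers x} = Set.univ := by
      ext z
      simp only [Set.mem_setOf_eq, Set.mem_univ, iff_true]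
      left
      rw [hx1]
      exact one_mem _
    have h1 := degree_add_one (G := G) y
    have h2 := degree_add_one (G := G) x
    rw [hNx, Set.ncard_univ, Nat.card_eq_fintype_card] at h2
    have h3 : {z : G | y ∈ zpowers z ∨ z ∈ zpowers y}.ncard ≤ Fintype.card G := by
      calc {z : G | y ∈ zpowers z ∨ z ∈ zpowers y}.ncard
          ≤ (Set.univ : Set G).ncard :=
            Set.ncard_le_ncard (Set.subset_univ _) (Set.toFinite _)
        _ = Fintype.card G := by rw [Set.ncard_univ, Nat.card_eq_fintype_card]
    omega
  -- case x ≠ 1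
  have hzxP : zpowers x ≤ P k := Subgroup.zpowers_le.mpr hx
  set S : Set (Subgroup G) := {H | IsCyclic ↥H ∧ H ≤ P k ∧ zpowers x ≤ H} with hS
  have hSne : S.Nonempty := ⟨zpowers x, _root_.isCyclic_zpowers x, hzxP, le_refl _⟩
  obtain ⟨M, hMS, hMmax⟩ := Set.Finite.exists_maximalFor
    (fun H : Subgroup G => Nat.card ↥H) S (Set.toFinite S) hSne
  have hMin : IsMaximalCyclicIn (P k) M := by
    refine ⟨hMS.1, hMS.2.1, fun N hN hNP hMN => ?_⟩
    have hcardeq := hMmax (j := N) ⟨hN, hNP, le_trans hMS.2.2 hMN⟩ (Subgroup.card_le_of_le hMN)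
    exact subgroup_eq_of_le_of_card_le M N hMN hcardeq
  have hxM : x ∈ M := hMS.2.2 (mem_zpowers x)
  have hMdvd : Nat.card ↥M ∣ p k ^ α k := by
    rw [← hP k]; exact Subgroup.card_dvd_of_le hMS.2.1
  obtain ⟨m, hmα, hMm⟩ := (Nat.dvd_prime_pow hpk).mp hMdvd
  obtain ⟨w, hwM, hwz⟩ := exists_zpowers_eq M hMS.1
  have hwo : orderOf w = p k ^ m := by rw [← Nat.card_zpowers, hwz, hMm]
  have hxw : x ∈ zpowers w := by rw [hwz]; exact hxM
  have hox_dvd : orderOf x ∣ p k ^ m := by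
    rw [← Nat.card_zpowers, ← hMm]
    exact Subgroup.card_dvd_of_le (Subgroup.zpowers_le.mpr hxM)
  obtain ⟨s, hsm, hsx⟩ := (Nat.dvd_prime_pow hpk).mp hox_dvd
  have hss : 1 ≤ s := by
    rcases Nat.eq_zero_or_pos s with rfl | h
    · rw [pow_zero] at hsx; exact absurd (orderOf_eq_one_iff.mp hsx) hx1
    · exact h
  have htm : t ≤ m := by
    have := hymin M hMin
    rw [Nat.card_zpowers, hty, hMm] at this
    exact (Nat.pow_le_pow_iff_right hpk.one_lt).mp this
  have hgx_card := gset_card hpk x hsx hss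
  have countx := count x hx
  have hux : p k ^ m ≤ {z : G | z ∈ P k ∧ x ∈ zpowers z}.ncard + p k ^ (s - 1) := by
    have hsub : (M : Set G) ⊆ {z : G | z ∈ P k ∧ x ∈ zpowers z} ∪
        {z : G | z ∈ zpowers w ∧ z ^ p k ^ (s - 1) = 1} := by
      intro z hz
      have hzw : z ∈ zpowers w := by rw [hwz]; exact hz
      rcases mem_zpowers_or_pow_eq_one hpk w x z hxw hzw hwo hsx hss with h | h
      · exact Or.inl ⟨hMS.2.1 hz, h⟩
      · exact Or.inr ⟨hzw, h⟩
    have h1 : (M : Set G).ncard = p k ^ m := by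
      rw [← Nat.card_coe_set_eq]
      exact hMm
    have h2 := ncard_pow_eq_one w (p k ^ (s - 1))
      (by rw [hwo]; exact pow_dvd_pow _ (by omega))
    calc p k ^ m = (M : Set G).ncard := h1.symm
      _ ≤ ({z : G | z ∈ P k ∧ x ∈ zpowers z} ∪
          {z : G | z ∈ zpowers w ∧ z ^ p k ^ (s - 1) = 1}).ncard :=
          Set.ncard_le_ncard hsub (Set.toFinite _)
      _ ≤ {z : G | z ∈ P k ∧ x ∈ zpowers z}.ncard +
          {z : G | z ∈ zpowers w ∧ z ^ p k ^ (s - 1) = 1}.ncard :=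
          Set.ncard_union_le _ _
      _ = {z : G | z ∈ P k ∧ x ∈ zpowers z}.ncard + p k ^ (s - 1) := by rw [h2]
  -- final arithmetic
  rw [hty] at county
  rw [hsx] at countx
  rw [hgy_eq] at hgy_card
  have hpow : ∀ n : ℕ, 1 ≤ n → p k ^ n = p k * p k ^ (n - 1) := by
    intro n hn
    conv_lhs => rw [show n = (n - 1) + 1 by omega]
    rw [pow_succ']
  rw [hpow t hts] at county hgy_card
  rw [hpow s hss] at countx hgx_card
  rw [hpow m (le_trans hts htm)] at hux
  have hAQ : p k ^ (t - 1) ≤ p k ^ (m - 1) := Nat.pow_le_pow_right hpk.pos (by omega)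
  have hBQ : p k ^ (s - 1) ≤ p k ^ (m - 1) := Nat.pow_le_pow_right hpk.pos (by omega)
  have hcK1 : 1 ≤ Nat.card ↥K := Nat.card_pos
  have hdy := degree_add_one (G := G) y
  have hdx := degree_add_one (G := G) x
  have key : {z : G | y ∈ zpowers z ∨ z ∈ zpowers y}.ncard ≤
      {z : G | x ∈ zpowers z ∨ z ∈ zpowers x}.ncard :=
    arith_key _ _ _ _ _ _ _ _ _ _ county hgy_card countx hgx_card hux hAQ hBQ hcK1 hpk.two_le
  omega
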